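/- Let f be a randomized mechanism for two agents on the line that is truthful in expectation. Define f′ by f′(x₁,x₂) = T_{x_L,x_R}(f(x₁,x₂)) whenever x₁ ≠ x₂ (where x_L = min(x₁,x₂) and x_R = max(x₁,x₂)), and f′(x,x) = f(x,x). Then f′ is truthful in expectation. -/

import Mathlib

open MeasureTheory

/-- The transformation `T` from the paper: given `x_L < x_R` with midpoint
`M = (x_L+x_R)/2` and a measure `μ`, the transformed measure agrees with `μ` outside
`[x_L, x_R]`, assigns measure zero to `(x_L,M) ∪ (M,x_R)`, and moves the mass `p_ℓ` of
`(x_L,M)` (with conditional mean `π_ℓ = q_ℓ x_L + (1-q_ℓ) M`) onto the points `x_L` and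
`M` with weights `q_ℓ p_ℓ` and `(1-q_ℓ) p_ℓ`, and symmetrically the mass `p_r` of
`(M,x_R)` onto `x_R` and `M`. (When `p_ℓ = 0` the products `q_ℓ p_ℓ` and `(1-q_ℓ) p_ℓ`
vanish, and similarly on the right.) -/
noncomputable def Tmeas (xL xR : ℝ) (μ : Measure ℝ) : Measure ℝ :=
  let M := (xL + xR) / 2
  let pl := (μ (Set.Ioo xL M)).toReal
  let pr := (μ (Set.Ioo M xR)).toReal
  let πl := (∫ y in Set.Ioo xL M, y ∂μ) / pl
  let πr := (∫ y in Set.Ioo M xR, y ∂μ) / pr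
  let ql := (M - πl) / (M - xL)
  let qr := (πr - M) / (xR - M)
  μ.restrict (Set.Iio xL ∪ Set.Ioi xR)
    + (μ {xL} + ENNReal.ofReal (ql * pl)) • Measure.dirac xL
    + (μ {M} + ENNReal.ofReal ((1 - ql) * pl + (1 - qr) * pr)) • Measure.dirac M
    + (μ {xR} + ENNReal.ofReal (qr * pr)) • Measure.dirac xR


section AuxStmt4
open Set ENNReal

lemma integrable_dirac'' {g : ℝ → ℝ} (x : ℝ) : Integrable g (Measure.dirac x) := by
  refine (integrable_const (g x)).congr ?_
  rw [MeasureTheory.ae_dirac_eq]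
  exact Filter.eventually_pure.mpr rfl

lemma integral_T_form (S : Set ℝ) (μ : Measure ℝ)
    (g : ℝ → ℝ) (hg : Integrable g μ)
    (xa xb xc : ℝ) (ca cb cc : ℝ≥0∞) (hca : ca ≠ ⊤) (hcb : cb ≠ ⊤) (hcc : cc ≠ ⊤) :
    ∫ y, g y ∂(μ.restrict S + ca • Measure.dirac xa + cb • Measure.dirac xb
        + cc • Measure.dirac xc)
      = (∫ y in S, g y ∂μ) + ca.toReal * g xa + cb.toReal * g xb + cc.toReal * g xc := by
  have ha : Integrable g (ca • Measure.dirac xa) := (integrable_dirac'' xa).smul_measure hca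
  have hb : Integrable g (cb • Measure.dirac xb) := (integrable_dirac'' xb).smul_measure hcb
  have hc : Integrable g (cc • Measure.dirac xc) := (integrable_dirac'' xc).smul_measure hcc
  have hr : Integrable g (μ.restrict S) := hg.restrict
  rw [integral_add_measure (((hr.add_measure ha).add_measure hb)) hc,
    integral_add_measure (hr.add_measure ha) hb,
    integral_add_measure hr ha,
    integral_smul_measure, integral_smul_measure, integral_smul_measure,
    integral_dirac, integral_dirac, integral_dirac]
  simp [smul_eq_mul]

variable {μ : Measure ℝ}

lemma piece_interp [IsFiniteMeasure μ] (a b t : ℝ)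
    (hid : IntegrableOn (fun y : ℝ => y) (Ioo a b) μ) (hab : a < b) :
    ∫ y in Ioo a b, ((b - y) * |a - t| + (y - a) * |b - t|) / (b - a) ∂μ
      = (b * (μ (Ioo a b)).toReal - ∫ y in Ioo a b, y ∂μ) / (b - a) * |a - t|
        + ((∫ y in Ioo a b, y ∂μ) - a * (μ (Ioo a b)).toReal) / (b - a) * |b - t| := by
  have hba : (0:ℝ) < b - a := sub_pos.mpr hab
  have hba' : b - a ≠ 0 := ne_of_gt hba
  have hfun : (fun y : ℝ => ((b - y) * |a - t| + (y - a) * |b - t|) / (b - a))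
      = fun y : ℝ => (b * |a - t| - a * |b - t|) / (b - a)
        + ((|b - t| - |a - t|) / (b - a)) * y := by
    funext y; ring
  rw [hfun, integral_add (integrableOn_const (C := (b * |a - t| - a * |b - t|) / (b - a))
      (s := Ioo a b) (μ := μ) (measure_ne_top _ _))
      (hid.const_mul _), integral_const_mul, setIntegral_const, measureReal_def, smul_eq_mul]
  field_simp
  ring

lemma piece_le [IsFiniteMeasure μ] (a b t : ℝ)
    (hid : IntegrableOn (fun y : ℝ => y) (Ioo a b) μ)
    (habs : IntegrableOn (fun y : ℝ => |y - t|) (Ioo a b) μ) (hab : a < b) :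
    ∫ y in Ioo a b, |y - t| ∂μ
      ≤ (b * (μ (Ioo a b)).toReal - ∫ y in Ioo a b, y ∂μ) / (b - a) * |a - t|
        + ((∫ y in Ioo a b, y ∂μ) - a * (μ (Ioo a b)).toReal) / (b - a) * |b - t| := by
  have hba : (0:ℝ) < b - a := sub_pos.mpr hab
  rw [← piece_interp a b t hid hab]
  have hint2 : IntegrableOn
      (fun y : ℝ => ((b - y) * |a - t| + (y - a) * |b - t|) / (b - a)) (Ioo a b) μ := by
    have : (fun y : ℝ => ((b - y) * |a - t| + (y - a) * |b - t|) / (b - a))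
        = fun y : ℝ => (b * |a - t| - a * |b - t|) / (b - a)
          + ((|b - t| - |a - t|) / (b - a)) * y := by funext y; ring
    rw [this]
    exact (integrableOn_const (measure_ne_top _ _)).add (hid.const_mul _)
  refine setIntegral_mono_on habs hint2 measurableSet_Ioo ?_
  intro y hy
  rw [le_div_iff₀ hba]
  have key : (y - t) * (b - a) = (b - y) * (a - t) + (y - a) * (b - t) := by ring
  calc |y - t| * (b - a) = |(y - t) * (b - a)| := by
        rw [abs_mul, abs_of_pos hba]
    _ = |(b - y) * (a - t) + (y - a) * (b - t)| := by rw [key]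
    _ ≤ |(b - y) * (a - t)| + |(y - a) * (b - t)| := abs_add_le _ _
    _ = (b - y) * |a - t| + (y - a) * |b - t| := by
        rw [abs_mul, abs_mul, abs_of_pos (sub_pos.mpr hy.2), abs_of_pos (sub_pos.mpr hy.1)]

lemma piece_eq [IsFiniteMeasure μ] (a b t : ℝ)
    (hid : IntegrableOn (fun y : ℝ => y) (Ioo a b) μ)
    (hab : a < b) (ht : t ≤ a ∨ b ≤ t) :
    ∫ y in Ioo a b, |y - t| ∂μ
      = (b * (μ (Ioo a b)).toReal - ∫ y in Ioo a b, y ∂μ) / (b - a) * |a - t|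
        + ((∫ y in Ioo a b, y ∂μ) - a * (μ (Ioo a b)).toReal) / (b - a) * |b - t| := by
  have hba : (0:ℝ) < b - a := sub_pos.mpr hab
  have hba' : b - a ≠ 0 := ne_of_gt hba
  rw [← piece_interp a b t hid hab]
  refine setIntegral_congr_fun measurableSet_Ioo ?_
  intro y hy
  rcases ht with ht | ht
  · have h1 : |y - t| = y - t := abs_of_pos (by linarith [hy.1])
    have h2 : |a - t| = a - t := abs_of_nonneg (by linarith)
    have h3 : |b - t| = b - t := abs_of_pos (by linarith [hy.2])
    simp only []; rw [h1, h2, h3]; field_simp; ring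
  · have h1 : |y - t| = t - y := by rw [abs_sub_comm]; exact abs_of_pos (by linarith [hy.2])
    have h2 : |a - t| = t - a := by rw [abs_sub_comm]; exact abs_of_nonneg (by linarith)
    have h3 : |b - t| = t - b := by rw [abs_sub_comm]; exact abs_of_nonneg (by linarith)
    simp only []; rw [h1, h2, h3]; field_simp; ring

lemma decomp (g : ℝ → ℝ) (hg : Integrable g μ) (xL M xR : ℝ) (h1 : xL < M) (h2 : M < xR) :
    ∫ y, g y ∂μ
      = (∫ y in Iio xL ∪ Ioi xR, g y ∂μ) + (μ {xL}).toReal * g xL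
        + (∫ y in Ioo xL M, g y ∂μ) + (μ {M}).toReal * g M
        + (∫ y in Ioo M xR, g y ∂μ) + (μ {xR}).toReal * g xR := by
  have hIci : ∀ c : ℝ, ∫ y in Ici c, g y ∂μ = (μ {c}).toReal * g c + ∫ y in Ioi c, g y ∂μ := by
    intro c
    have hs : Ici c = {c} ∪ Ioi c := by rw [singleton_union, Ioi_insert]
    rw [hs, setIntegral_union (by simp) measurableSet_Ioi hg.integrableOn hg.integrableOn,
      integral_singleton, smul_eq_mul, measureReal_def]
  have hIoi : ∀ a b : ℝ, a < b →
      ∫ y in Ioi a, g y ∂μ = (∫ y in Ioo a b, g y ∂μ) + ∫ y in Ici b, g y ∂μ := by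
    intro a b hab
    rw [← Ioo_union_Ici_eq_Ioi hab,
      setIntegral_union ((Iio_disjoint_Ici le_rfl).mono Ioo_subset_Iio_self le_rfl)
        measurableSet_Ici hg.integrableOn hg.integrableOn]
  have hsplit : ∫ y, g y ∂μ = (∫ y in Iio xL, g y ∂μ) + ∫ y in Ici xL, g y ∂μ := by
    rw [← integral_add_compl measurableSet_Iio hg, compl_Iio]
  have hS : ∫ y in Iio xL ∪ Ioi xR, g y ∂μ = (∫ y in Iio xL, g y ∂μ) + ∫ y in Ioi xR, g y ∂μ := by
    rw [setIntegral_union ((Iio_disjoint_Ici h1.le).mono le_rfl (Ioi_subset_Ici h2.le))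
      measurableSet_Ioi hg.integrableOn hg.integrableOn]
  rw [hsplit, hIci xL, hIoi xL M h1, hIci M, hIoi M xR h2, hIci xR, hS]
  ring

lemma T_cost (xL xR : ℝ) (hx : xL < xR) (μ : Measure ℝ) [IsProbabilityMeasure μ]
    (hμ : Integrable (fun y => |y|) μ) (t : ℝ) :
    (∫ y, |y - t| ∂μ ≤ ∫ y, |y - t| ∂(Tmeas xL xR μ)) ∧
    ((t = xL ∨ t = xR) → (∫ y, |y - t| ∂(Tmeas xL xR μ)) = ∫ y, |y - t| ∂μ) := by
  have hid : Integrable (fun y : ℝ => y) μ := by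
    have := (integrable_norm_iff (f := fun y : ℝ => y) (measurable_id.aestronglyMeasurable)).mp
      (by convert hμ using 1; funext y; exact Real.norm_eq_abs _)
    exact this
  have habs : Integrable (fun y : ℝ => |y - t|) μ := by
    refine (hμ.add (integrable_const |t|)).mono'
      ((continuous_abs.comp (continuous_id.sub continuous_const)).aestronglyMeasurable) ?_
    filter_upwards with y
    simp only [Real.norm_eq_abs, abs_abs]
    calc |y - t| ≤ |y| + |(-t)| := by rw [sub_eq_add_neg]; exact abs_add_le _ _
      _ = |y| + |t| := by rw [abs_neg]
  set M : ℝ := (xL + xR) / 2 with hMdef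
  have hLM : xL < M := by rw [hMdef]; linarith
  have hMR : M < xR := by rw [hMdef]; linarith
  set pl : ℝ := (μ (Ioo xL M)).toReal with hpl
  set pr : ℝ := (μ (Ioo M xR)).toReal with hpr
  set Il : ℝ := ∫ y in Ioo xL M, y ∂μ with hIl
  set Ir : ℝ := ∫ y in Ioo M xR, y ∂μ with hIr
  set Al : ℝ := (M * pl - Il) / (M - xL) with hAl
  set Bl : ℝ := (Il - xL * pl) / (M - xL) with hBl
  set Ar : ℝ := (Ir - M * pr) / (xR - M) with hAr
  set Br : ℝ := (xR * pr - Ir) / (xR - M) with hBr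
  have hMxL : M - xL ≠ 0 := ne_of_gt (sub_pos.mpr hLM)
  have hxRM : xR - M ≠ 0 := ne_of_gt (sub_pos.mpr hMR)
  -- coefficient identities
  have eAl : (M - Il / pl) / (M - xL) * pl = Al := by
    by_cases hp : pl = 0
    · have h0 : μ (Ioo xL M) = 0 := by
        have h1 := measure_ne_top μ (Ioo xL M)
        rcases (ENNReal.toReal_eq_zero_iff _).mp hp with h | h
        · exact h
        · exact absurd h h1
      have hIl0 : Il = 0 := by
        rw [hIl, Measure.restrict_eq_zero.mpr h0, integral_zero_measure]
      simp [hp, hIl0, hAl]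
    · rw [hAl]; field_simp
  have eBl : (1 - (M - Il / pl) / (M - xL)) * pl = Bl := by
    by_cases hp : pl = 0
    · have h0 : μ (Ioo xL M) = 0 := by
        have h1 := measure_ne_top μ (Ioo xL M)
        rcases (ENNReal.toReal_eq_zero_iff _).mp hp with h | h
        · exact h
        · exact absurd h h1
      have hIl0 : Il = 0 := by
        rw [hIl, Measure.restrict_eq_zero.mpr h0, integral_zero_measure]
      simp [hp, hIl0, hBl]
    · rw [hBl]; field_simp; ring
  have eAr : (Ir / pr - M) / (xR - M) * pr = Ar := by
    by_cases hp : pr = 0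
    · have h0 : μ (Ioo M xR) = 0 := by
        have h1 := measure_ne_top μ (Ioo M xR)
        rcases (ENNReal.toReal_eq_zero_iff _).mp hp with h | h
        · exact h
        · exact absurd h h1
      have hIr0 : Ir = 0 := by
        rw [hIr, Measure.restrict_eq_zero.mpr h0, integral_zero_measure]
      simp [hp, hIr0, hAr]
    · rw [hAr]; field_simp
  have eBr : (1 - (Ir / pr - M) / (xR - M)) * pr = Br := by
    by_cases hp : pr = 0
    · have h0 : μ (Ioo M xR) = 0 := by
        have h1 := measure_ne_top μ (Ioo M xR)
        rcases (ENNReal.toReal_eq_zero_iff _).mp hp with h | h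
        · exact h
        · exact absurd h h1
      have hIr0 : Ir = 0 := by
        rw [hIr, Measure.restrict_eq_zero.mpr h0, integral_zero_measure]
      simp [hp, hIr0, hBr]
    · rw [hBr]; field_simp; ring
  -- nonnegativity
  have hIlM : Il ≤ M * pl := by
    have h := setIntegral_mono_on (s := Ioo xL M) hid.integrableOn
      (integrableOn_const (measure_ne_top _ _)) measurableSet_Ioo
      (fun y hy => (hy.2.le : y ≤ M))
    rw [setIntegral_const, smul_eq_mul, measureReal_def] at h
    rw [hIl, hpl]; linarith [h]
  have hIlL : xL * pl ≤ Il := by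
    have h := setIntegral_mono_on (s := Ioo xL M)
      (integrableOn_const (measure_ne_top _ _)) hid.integrableOn measurableSet_Ioo
      (fun y hy => (hy.1.le : xL ≤ y))
    rw [setIntegral_const, smul_eq_mul, measureReal_def] at h
    rw [hIl, hpl]; linarith [h]
  have hIrR : Ir ≤ xR * pr := by
    have h := setIntegral_mono_on (s := Ioo M xR) hid.integrableOn
      (integrableOn_const (measure_ne_top _ _)) measurableSet_Ioo
      (fun y hy => (hy.2.le : y ≤ xR))
    rw [setIntegral_const, smul_eq_mul, measureReal_def] at h
    rw [hIr, hpr]; linarith [h]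
  have hIrM : M * pr ≤ Ir := by
    have h := setIntegral_mono_on (s := Ioo M xR)
      (integrableOn_const (measure_ne_top _ _)) hid.integrableOn measurableSet_Ioo
      (fun y hy => (hy.1.le : M ≤ y))
    rw [setIntegral_const, smul_eq_mul, measureReal_def] at h
    rw [hIr, hpr]; linarith [h]
  have hAl0 : 0 ≤ Al := div_nonneg (by linarith) (by linarith)
  have hBl0 : 0 ≤ Bl := div_nonneg (by linarith) (by linarith)
  have hAr0 : 0 ≤ Ar := div_nonneg (by linarith) (by linarith)
  have hBr0 : 0 ≤ Br := div_nonneg (by linarith) (by linarith)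
  -- integral against the transformed measure
  have hT : ∫ y, |y - t| ∂(Tmeas xL xR μ)
      = (∫ y in Iio xL ∪ Ioi xR, |y - t| ∂μ) + (μ {xL}).toReal * |xL - t| + Al * |xL - t|
        + (μ {M}).toReal * |M - t| + Bl * |M - t| + Br * |M - t|
        + (μ {xR}).toReal * |xR - t| + Ar * |xR - t| := by
    simp only [Tmeas]
    rw [← hMdef, ← hpl, ← hpr, ← hIl, ← hIr, eAl, eAr]
    have eB : (1 - (M - Il / pl) / (M - xL)) * pl + (1 - (Ir / pr - M) / (xR - M)) * pr
        = Bl + Br := by rw [eBl, eBr]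
    rw [eB]
    rw [integral_T_form _ μ _ habs xL M xR _ _ _
      (by simp [measure_ne_top]) (by simp [measure_ne_top]) (by simp [measure_ne_top])]
    rw [ENNReal.toReal_add (measure_ne_top _ _) ENNReal.ofReal_ne_top,
      ENNReal.toReal_add (measure_ne_top _ _) ENNReal.ofReal_ne_top,
      ENNReal.toReal_add (measure_ne_top _ _) ENNReal.ofReal_ne_top,
      ENNReal.toReal_ofReal hAl0, ENNReal.toReal_ofReal (add_nonneg hBl0 hBr0),
      ENNReal.toReal_ofReal hAr0]
    ring
  -- decomposition of the original integral
  have hD := decomp (fun y => |y - t|) habs xL M xR hLM hMR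
  -- piece bounds
  have hpadl := piece_le xL M t hid.integrableOn habs.integrableOn hLM
  have hpadr := piece_le M xR t hid.integrableOn habs.integrableOn hMR
  rw [← hIl, ← hpl, ← hAl, ← hBl] at hpadl
  rw [← hIr, ← hpr] at hpadr
  have hpadr' : ∫ y in Ioo M xR, |y - t| ∂μ ≤ Br * |M - t| + Ar * |xR - t| := by
    rw [hBr, hAr]; exact hpadr
  constructor
  · linarith [hT, hD, hpadl, hpadr']
  · intro ht
    have hpeql : ∫ y in Ioo xL M, |y - t| ∂μ = Al * |xL - t| + Bl * |M - t| := by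
      have h := piece_eq xL M t hid.integrableOn hLM
        (by rcases ht with h | h; exacts [Or.inl h.le, Or.inr (by rw [h]; exact hMR.le)])
      rw [← hIl, ← hpl, ← hAl, ← hBl] at h
      exact h
    have hpeqr : ∫ y in Ioo M xR, |y - t| ∂μ = Br * |M - t| + Ar * |xR - t| := by
      have h := piece_eq M xR t hid.integrableOn hMR
        (by rcases ht with h | h; exacts [Or.inl (by rw [h]; exact hLM.le), Or.inr h.ge])
      rw [← hIr, ← hpr, ← hAr, ← hBr] at h
      linarith [h]
    linarith [hT, hD, hpeql, hpeqr]

end AuxStmt4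

/-- A randomized mechanism for two agents on the line is truthful in expectation. -/
def TruthfulInExpectation (f : ℝ × ℝ → Measure ℝ) : Prop :=
  (∀ x₁ x₂ x₁' : ℝ,
    ∫ y, |y - x₁| ∂(f (x₁, x₂)) ≤ ∫ y, |y - x₁| ∂(f (x₁', x₂))) ∧
  (∀ x₁ x₂ x₂' : ℝ,
    ∫ y, |y - x₂| ∂(f (x₁, x₂)) ≤ ∫ y, |y - x₂| ∂(f (x₁, x₂')))

/-- if `f` is truthful in expectation, then the mechanism `f'` obtained by
applying the transformation `T` to the output of `f` on every profile with two distinct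
reports (and leaving `f` unchanged on profiles with coinciding reports) is also truthful
in expectation. -/
theorem stmt4 (f : ℝ × ℝ → Measure ℝ)
    (hprob : ∀ x, IsProbabilityMeasure (f x))
    (hmom : ∀ x, Integrable (fun y => |y|) (f x))
    (htruth : TruthfulInExpectation f)
    (f' : ℝ × ℝ → Measure ℝ)
    (hf' : ∀ x : ℝ × ℝ,
      f' x = if x.1 = x.2 then f x else Tmeas (min x.1 x.2) (max x.1 x.2) (f x)) :
    TruthfulInExpectation f' := by
  constructor
  · intro x₁ x₂ x₁'
    have h1 : f' (x₁, x₂) = if x₁ = x₂ then f (x₁, x₂)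
        else Tmeas (min x₁ x₂) (max x₁ x₂) (f (x₁, x₂)) := hf' (x₁, x₂)
    have h2 : f' (x₁', x₂) = if x₁' = x₂ then f (x₁', x₂)
        else Tmeas (min x₁' x₂) (max x₁' x₂) (f (x₁', x₂)) := hf' (x₁', x₂)
    have step1 : ∫ y, |y - x₁| ∂(f' (x₁, x₂)) = ∫ y, |y - x₁| ∂(f (x₁, x₂)) := by
      rw [h1]
      by_cases h : x₁ = x₂
      · rw [if_pos h]
      · rw [if_neg h]
        haveI := hprob (x₁, x₂)
        refine (T_cost _ _ (min_lt_max.mpr h) (f (x₁, x₂)) (hmom _) x₁).2 ?_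
        rcases le_total x₁ x₂ with hle | hle
        · exact Or.inl (min_eq_left hle).symm
        · exact Or.inr (max_eq_left hle).symm
    have step2 : ∫ y, |y - x₁| ∂(f (x₁', x₂)) ≤ ∫ y, |y - x₁| ∂(f' (x₁', x₂)) := by
      rw [h2]
      by_cases h : x₁' = x₂
      · rw [if_pos h]
      · rw [if_neg h]
        haveI := hprob (x₁', x₂)
        exact (T_cost _ _ (min_lt_max.mpr h) (f (x₁', x₂)) (hmom _) x₁).1
    calc ∫ y, |y - x₁| ∂(f' (x₁, x₂)) = ∫ y, |y - x₁| ∂(f (x₁, x₂)) := step1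
      _ ≤ ∫ y, |y - x₁| ∂(f (x₁', x₂)) := htruth.1 x₁ x₂ x₁'
      _ ≤ ∫ y, |y - x₁| ∂(f' (x₁', x₂)) := step2
  · intro x₁ x₂ x₂'
    have h1 : f' (x₁, x₂) = if x₁ = x₂ then f (x₁, x₂)
        else Tmeas (min x₁ x₂) (max x₁ x₂) (f (x₁, x₂)) := hf' (x₁, x₂)
    have h2 : f' (x₁, x₂') = if x₁ = x₂' then f (x₁, x₂')
        else Tmeas (min x₁ x₂') (max x₁ x₂') (f (x₁, x₂')) := hf' (x₁, x₂')
    have step1 : ∫ y, |y - x₂| ∂(f' (x₁, x₂)) = ∫ y, |y - x₂| ∂(f (x₁, x₂)) := by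
      rw [h1]
      by_cases h : x₁ = x₂
      · rw [if_pos h]
      · rw [if_neg h]
        haveI := hprob (x₁, x₂)
        refine (T_cost _ _ (min_lt_max.mpr h) (f (x₁, x₂)) (hmom _) x₂).2 ?_
        rcases le_total x₂ x₁ with hle | hle
        · exact Or.inl (min_eq_right hle).symm
        · exact Or.inr (max_eq_right hle).symm
    have step2 : ∫ y, |y - x₂| ∂(f (x₁, x₂')) ≤ ∫ y, |y - x₂| ∂(f' (x₁, x₂')) := by
      rw [h2]
      by_cases h : x₁ = x₂'
      · rw [if_pos h]
      · rw [if_neg h]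
        haveI := hprob (x₁, x₂')
        exact (T_cost _ _ (min_lt_max.mpr h) (f (x₁, x₂')) (hmom _) x₂).1
    calc ∫ y, |y - x₂| ∂(f' (x₁, x₂)) = ∫ y, |y - x₂| ∂(f (x₁, x₂)) := step1
      _ ≤ ∫ y, |y - x₂| ∂(f (x₁, x₂')) := htruth.2 x₁ x₂ x₂'
      _ ≤ ∫ y, |y - x₂| ∂(f' (x₁, x₂')) := step2
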